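/- arXiv:0911.0735 — 2 statements merged into one kernel-verified Lean document; each statement's English description precedes it below -/
import Mathlib

section
/- Let S be a set of m−1 distinct positive half-integers and let a be the smallest positive half-integer not in S. Let λ^{(0)} be the weight with λ̃^{(0)} = (−a | the elements of S ∪ {a} arranged in decreasing order). Then λ^{(0)} is g-dominant, and it is the unique integral g-dominant atypical weight with atypicality type S whose atypical root is a tail atypical root (equivalently, with λ̃_0 < 0). (Lemma 3.7(2) for k = 2m+1.) -/
/-!
Combinatorics of weights for the orthosymplectic Lie superalgebra
`osp_{2m+1|2} = B(m,1)` (so `k = 2m+1`, `s = 1/2`), with its distinguished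
Borel subalgebra.  A weight is a tuple `λ = (λ₀ | λ₁, …, λ_m) ∈ ℚ^{m+1}`,
encoded as `ℚ × (Fin m → ℚ)` (the index `i : Fin m` stands for the coordinate
`λ_{i+1}`).
-/

open Finset

noncomputable section

abbrev Wt (m : ℕ) := ℚ × (Fin m → ℚ)

def deltaW (m : ℕ) : Wt m := (1, 0)

def epsW {m : ℕ} (i : Fin m) : Wt m := (0, Pi.single i 1)

/-- The ρ-translated weight `λ̃ = λ + ρ`, with
`ρ = (s−m | m−s, m−1−s, …, 1−s)` and `s = 1/2`. -/
def tilde (m : ℕ) (lam : Wt m) : Wt m :=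
  (lam.1 + 1 / 2 - m, fun i => lam.2 i + (m : ℚ) - 1 / 2 - ((i : ℕ) : ℚ))

/-- `λ` is integral: `λ₀ ∈ ℤ` and `λ₁, …, λ_m` all in `ℤ` or all in `1/2 + ℤ`. -/
def Integral (m : ℕ) (lam : Wt m) : Prop :=
  (∃ n : ℤ, lam.1 = (n : ℚ)) ∧
    ((∀ i, ∃ n : ℤ, lam.2 i = (n : ℚ)) ∨ ∀ i, ∃ n : ℤ, lam.2 i = (n : ℚ) + 1 / 2)

/-- `λ` is `g₀`-dominant: `λ₁ ≥ λ₂ ≥ … ≥ λ_m ≥ 0`. -/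
def G0Dom (m : ℕ) (lam : Wt m) : Prop :=
  (∀ i j : Fin m, i ≤ j → lam.2 j ≤ lam.2 i) ∧ ∀ i, 0 ≤ lam.2 i

/-- `λ` is atypical: `|λ̃₀| = λ̃_ℓ` for some `ℓ`. -/
def Atypical (m : ℕ) (lam : Wt m) : Prop :=
  ∃ l : Fin m, |(tilde m lam).1| = (tilde m lam).2 l

/-- The atypicality type `S(λ̄) = {λ̃_i : i ≠ ℓ}` of an atypical `g₀`-dominant
weight `λ` (where `λ̃_ℓ = |λ̃₀|`). -/
def atypType (m : ℕ) (lam : Wt m) : Finset ℚ :=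
  (Finset.univ.image fun i => (tilde m lam).2 i).erase |(tilde m lam).1|

/-- `λ` is `g`-dominant: it is integral, `g₀`-dominant, `λ₀ ∈ ℤ≥0`, and
`λ_j = 0` whenever `j > λ₀`. -/
def GDom (m : ℕ) (lam : Wt m) : Prop :=
  Integral m lam ∧ G0Dom m lam ∧ 0 ≤ lam.1 ∧
    ∀ i : Fin m, lam.1 < ((i : ℕ) : ℚ) + 1 → lam.2 i = 0

/-- `λ^σ = (−λ₀ + 2(m−s) | λ₁, …, λ_m)` with `s = 1/2`. -/
def sigmaW (m : ℕ) (lam : Wt m) : Wt m := (-lam.1 + 2 * (m : ℚ) - 1, lam.2)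

/-- `γ` is the atypical root of `λ`: `γ = δ + ε_ℓ` if `λ̃₀ = λ̃_ℓ`, and
`γ = δ − ε_ℓ` if `λ̃₀ = −λ̃_ℓ`. -/
def AtypRoot (m : ℕ) (lam γ : Wt m) : Prop :=
  ∃ l : Fin m,
    (γ = deltaW m + epsW l ∧ (tilde m lam).1 = (tilde m lam).2 l) ∨
      (γ = deltaW m - epsW l ∧ (tilde m lam).1 = -(tilde m lam).2 l)

/-- `λ` is regular: `|λ̃₁|, …, |λ̃_m|` are pairwise distinct. -/
def Regular (m : ℕ) (lam : Wt m) : Prop :=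
  ∀ i j : Fin m, |(tilde m lam).2 i| = |(tilde m lam).2 j| → i = j

/-- Elements of the Weyl group `W₀` of type `B_m`: signed permutations
(`true` = change sign). -/
abbrev W0T (m : ℕ) := Equiv.Perm (Fin m) × (Fin m → Bool)

/-- The action of `w ∈ W₀` on ρ-translated weights: it fixes the coordinate
`λ̃₀` and signed-permutes `λ̃₁, …, λ̃_m`. -/
def tact (m : ℕ) (w : W0T m) (v : Wt m) : Wt m :=
  (v.1, fun i => (if w.2 i then (-1 : ℚ) else 1) * v.2 (w.1⁻¹ i))

/-- The signature of `w ∈ W₀`. -/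
def sgn (m : ℕ) (w : W0T m) : ℤ :=
  (Equiv.Perm.sign w.1 : ℤ) * ∏ i, (if w.2 i then (-1 : ℤ) else 1)

/-- `ν` is `W₀`-dot-conjugate to `λ`, i.e. `ν = w·λ = w(λ+ρ) − ρ` for some
`w ∈ W₀`. -/
def DotConj (m : ℕ) (lam nu : Wt m) : Prop :=
  ∃ w : W0T m, tilde m nu = tact m w (tilde m lam)

/-- `ν = λ⁺`: `ν` is the (unique) `g₀`-dominant `W₀`-dot-conjugate of `λ`. -/
def IsPlus (m : ℕ) (lam nu : Wt m) : Prop :=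
  G0Dom m nu ∧ DotConj m lam nu

/-- `ν = λˇ = (λ − a₋γ)⁺`, where `γ` is the atypical root of `λ` and `a₋` is
the smallest positive integer with `λ − a₋γ` regular. -/
def IsCheck (m : ℕ) (lam nu : Wt m) : Prop :=
  ∃ γ : Wt m, AtypRoot m lam γ ∧
    ∃ a : ℕ, 0 < a ∧ Regular m (lam - (a : ℚ) • γ) ∧
      (∀ b : ℕ, 0 < b → b < a → ¬Regular m (lam - (b : ℚ) • γ)) ∧
      IsPlus m (lam - (a : ℚ) • γ) nu

/-- `ν = λ^ = (λ + a₊γ)⁺`, where `γ` is the atypical root of `λ` and `a₊` is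
the smallest positive integer with `λ + a₊γ` regular. -/
def IsHat (m : ℕ) (lam nu : Wt m) : Prop :=
  ∃ γ : Wt m, AtypRoot m lam γ ∧
    ∃ a : ℕ, 0 < a ∧ Regular m (lam + (a : ℚ) • γ) ∧
      (∀ b : ℕ, 0 < b → b < a → ¬Regular m (lam + (b : ℚ) • γ)) ∧
      IsPlus m (lam + (a : ℚ) • γ) nu

section Aux
lemma half_gap {p q : ℕ} (h : (p:ℚ) + 1/2 < (q:ℚ) + 1/2) : (p:ℚ) + 1/2 + 1 ≤ (q:ℚ) + 1/2 := by
  have hpq : p < q := by exact_mod_cast (by linarith : (p:ℚ) < (q:ℚ))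
  have : (p:ℚ) + 1 ≤ (q:ℚ) := by exact_mod_cast hpq
  linarith

lemma anti_le {m : ℕ} {f : Fin m → ℚ} (hdec : ∀ i j : Fin m, i < j → f j < f i)
    {i j : Fin m} (h : i ≤ j) : f j ≤ f i := by
  rcases eq_or_lt_of_le h with h | h
  · rw [h]
  · exact (hdec i j h).le

lemma gap_lemma {m : ℕ} {f : Fin m → ℚ} (hdec : ∀ i j : Fin m, i < j → f j < f i)
    (hv : ∀ i, ∃ k : ℕ, f i = (k:ℚ) + 1/2) :
    ∀ (d : ℕ) (i j : Fin m), (j:ℕ) = (i:ℕ) + d → f j + (d:ℚ) ≤ f i := by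
  intro d
  induction d with
  | zero =>
    intro i j h
    have : i = j := Fin.ext (by omega)
    simp [this]
  | succ d ih =>
    intro i j h
    have hj' : (i:ℕ) + d < m := by have := j.isLt; omega
    set j' : Fin m := ⟨(i:ℕ) + d, hj'⟩ with hj'def
    have h1 : f j < f j' := hdec j' j (by simp [Fin.lt_def, hj'def]; omega)
    obtain ⟨p, hp⟩ := hv j
    obtain ⟨q, hq⟩ := hv j'
    have h2 : f j + 1 ≤ f j' := by
      rw [hp, hq] at h1 ⊢; exact half_gap h1
    have h3 := ih i j' rfl
    push_cast
    push_cast at h3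
    linarith

lemma key_lemma {m : ℕ} {f : Fin m → ℚ} (hdec : ∀ i j : Fin m, i < j → f j < f i)
    (hv : ∀ i, ∃ k : ℕ, f i = (k:ℚ) + 1/2)
    {n : ℕ} (hmem : ∀ j : ℕ, j ≤ n → ∃ p : Fin m, f p = (j:ℚ) + 1/2) :
    ∀ j : ℕ, j ≤ n → ∀ (hjm : j < m), f ⟨m - 1 - j, by omega⟩ = (j:ℚ) + 1/2 := by
  intro j
  induction j with
  | zero =>
    intro _ hjm
    obtain ⟨k, hk⟩ := hv ⟨m - 1 - 0, by omega⟩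
    have hlow : ((0:ℕ):ℚ) + 1/2 ≤ f ⟨m - 1 - 0, by omega⟩ := by
      rw [hk]; push_cast; linarith [Nat.cast_nonneg (α := ℚ) k]
    obtain ⟨p, hp⟩ := hmem 0 (Nat.zero_le n)
    rcases lt_trichotomy (p : ℕ) (m - 1 - 0) with hc | hc | hc
    · exfalso
      have := hdec p ⟨m - 1 - 0, by omega⟩ (by simp [Fin.lt_def]; omega)
      rw [hp] at this
      linarith
    · have : p = ⟨m - 1 - 0, by omega⟩ := Fin.ext hc
      rw [← this, hp]
    · exfalso; have := p.isLt; omega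
  | succ j ih =>
    intro hjn hjm
    have hIH := ih (by omega) (by omega)
    have hlt : (⟨m - 1 - (j+1), by omega⟩ : Fin m) < ⟨m - 1 - j, by omega⟩ := by
      simp [Fin.lt_def]; omega
    have h1 := hdec _ _ hlt
    rw [hIH] at h1
    obtain ⟨k, hk⟩ := hv ⟨m - 1 - (j+1), by omega⟩
    have hlow : ((j+1:ℕ):ℚ) + 1/2 ≤ f ⟨m - 1 - (j+1), by omega⟩ := by
      rw [hk] at h1 ⊢
      have := half_gap h1
      push_cast at this ⊢
      linarith
    obtain ⟨p, hp⟩ := hmem (j+1) hjn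
    rcases lt_trichotomy (p : ℕ) (m - 1 - (j+1)) with hc | hc | hc
    · exfalso
      have := hdec p ⟨m - 1 - (j+1), by omega⟩ (by simp [Fin.lt_def]; omega)
      rw [hp] at this
      linarith
    · have : p = ⟨m - 1 - (j+1), by omega⟩ := Fin.ext hc
      rw [← this, hp]
    · exfalso
      have hple : (⟨m - 1 - j, by omega⟩ : Fin m) ≤ p := by
        simp [Fin.le_def]; omega
      have := anti_le hdec hple
      rw [hp, hIH] at this
      push_cast at this
      linarith

lemma dec_image_eq {m : ℕ} {f g : Fin m → ℚ}
    (hf : ∀ i j : Fin m, i < j → f j < f i) (hg : ∀ i j : Fin m, i < j → g j < g i)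
    (him : Finset.univ.image f = Finset.univ.image g) : f = g := by
  suffices h : ∀ N (i : Fin m), (i:ℕ) < N → f i = g i by
    funext i; exact h m i i.isLt
  intro N
  induction N with
  | zero => intro i hi; omega
  | succ N ih =>
    intro i hi
    rcases lt_trichotomy (f i) (g i) with h | h | h
    · exfalso
      have hmem : g i ∈ Finset.univ.image f := by
        rw [him]; exact mem_image_of_mem g (mem_univ i)
      obtain ⟨q, -, hq⟩ := mem_image.mp hmem
      have hqi : q < i := by
        by_contra hqi
        have := anti_le hf (le_of_not_gt hqi : i ≤ q)
        rw [hq] at this; linarith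
      have hq' : f q = g q := ih q (by have := Fin.lt_def.mp hqi; omega)
      rw [hq'] at hq
      exact absurd hq (ne_of_gt (hg q i hqi))
    · exact h
    · exfalso
      have hmem : f i ∈ Finset.univ.image g := by
        rw [← him]; exact mem_image_of_mem f (mem_univ i)
      obtain ⟨q, -, hq⟩ := mem_image.mp hmem
      have hqi : q < i := by
        by_contra hqi
        have := anti_le hg (le_of_not_gt hqi : i ≤ q)
        rw [hq] at this; linarith
      have hq' : f q = g q := ih q (by have := Fin.lt_def.mp hqi; omega)
      rw [← hq'] at hq
      exact absurd hq (ne_of_gt (hf q i hqi))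
end Aux

/-- Lemma 3.7(2) for `k = 2m+1`: let `S` be a set of `m−1`
distinct positive half-integers and `a` the smallest positive half-integer not
in `S`.  Let `λ⁽⁰⁾` be the weight with
`λ̃⁽⁰⁾ = (−a | the elements of S ∪ {a} in decreasing order)`.  Then `λ⁽⁰⁾` is
`g`-dominant, and it is the unique integral `g`-dominant atypical weight with
atypicality type `S` whose atypical root is a tail atypical root
(equivalently, with `λ̃₀ < 0`). -/
theorem lambda0_unique_tail_dominant (m : ℕ) (hm : 1 ≤ m)
    (S : Finset ℚ) (hcard : S.card = m - 1)
    (hS : ∀ x ∈ S, ∃ n : ℕ, x = (n : ℚ) + 1 / 2)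
    (a : ℚ) (ha : ∃ n : ℕ, a = (n : ℚ) + 1 / 2) (haS : a ∉ S)
    (hmin : ∀ b : ℚ, (∃ n : ℕ, b = (n : ℚ) + 1 / 2) → b ∉ S → a ≤ b)
    (lam0 : Wt m)
    (h1 : (tilde m lam0).1 = -a)
    (h2 : (Finset.univ.image fun i => (tilde m lam0).2 i) = insert a S)
    (h3 : ∀ i j : Fin m, i < j → (tilde m lam0).2 j < (tilde m lam0).2 i) :
    GDom m lam0 ∧ Atypical m lam0 ∧ atypType m lam0 = S ∧
      (tilde m lam0).1 < 0 ∧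
      ∀ mu : Wt m, GDom m mu → Atypical m mu → atypType m mu = S →
        (tilde m mu).1 < 0 → mu = lam0 := by
  obtain ⟨n, han⟩ := ha
  set f := (tilde m lam0).2 with hfdef
  have hfi : ∀ i : Fin m, f i = lam0.2 i + (m:ℚ) - 1/2 - ((i:ℕ):ℚ) := fun i => rfl
  have hl01 : lam0.1 + 1/2 - (m:ℚ) = -a := h1
  -- values of f are positive half-integers
  have hfv : ∀ i, ∃ k : ℕ, f i = (k:ℚ) + 1/2 := by
    intro i
    have hmem : f i ∈ insert a S := by
      rw [← h2]; exact mem_image_of_mem _ (mem_univ i)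
    rcases mem_insert.mp hmem with h | h
    · exact ⟨n, h.trans han⟩
    · exact hS _ h
  -- membership of small half-integers
  have hmemIns : ∀ j : ℕ, j ≤ n → ((j:ℚ) + 1/2) ∈ insert a S := by
    intro j hj
    rcases eq_or_lt_of_le hj with rfl | hj
    · rw [← han]; exact mem_insert_self a S
    · apply mem_insert_of_mem
      by_contra hnot
      have hle := hmin _ ⟨j, rfl⟩ hnot
      have : (j:ℚ) < (n:ℚ) := by exact_mod_cast hj
      rw [han] at hle
      linarith
  have hmem : ∀ j : ℕ, j ≤ n → ∃ p : Fin m, f p = (j:ℚ) + 1/2 := by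
    intro j hj
    have := hmemIns j hj
    rw [← h2] at this
    obtain ⟨p, -, hp⟩ := mem_image.mp this
    exact ⟨p, hp⟩
  -- n + 1 ≤ m
  have hinscard : (insert a S).card = m := by
    rw [card_insert_of_notMem haS, hcard]; omega
  have hnm : n + 1 ≤ m := by
    have hsub : (Finset.range (n+1)).image (fun j : ℕ => (j:ℚ) + 1/2) ⊆ insert a S := by
      intro x hx
      obtain ⟨j, hj, rfl⟩ := mem_image.mp hx
      exact hmemIns j (by have := Finset.mem_range.mp hj; omega)
    have hinj : Function.Injective (fun j : ℕ => (j:ℚ) + 1/2) := by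
      intro x y hxy
      simp only at hxy
      exact_mod_cast (by linarith : (x:ℚ) = y)
    have := card_le_card hsub
    rw [card_image_of_injective _ hinj, card_range, hinscard] at this
    exact this
  have hkey := key_lemma h3 hfv hmem
  have ha_pos : (0:ℚ) < a := by rw [han]; positivity
  -- lam0.1 value
  have hl1val : lam0.1 = (m:ℚ) - 1 - n := by
    rw [han] at hl01; linarith
  -- GDom lam0
  have hGDom : GDom m lam0 := by
    refine ⟨⟨⟨(m:ℤ) - 1 - n, by rw [hl1val]; push_cast; ring⟩, Or.inl ?_⟩, ⟨?_, ?_⟩, ?_, ?_⟩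
    · intro i
      obtain ⟨k, hk⟩ := hfv i
      refine ⟨(k:ℤ) + 1 + (i:ℕ) - m, ?_⟩
      have := hfi i
      rw [hk] at this
      push_cast
      linarith
    · intro i j hij
      rcases eq_or_lt_of_le hij with rfl | hij
      · exact le_refl _
      · have hgap := gap_lemma h3 hfv ((j:ℕ) - (i:ℕ)) i j (by have := Fin.lt_def.mp hij; omega)
        have hcast : (((j:ℕ) - (i:ℕ) : ℕ) : ℚ) = ((j:ℕ):ℚ) - ((i:ℕ):ℚ) := by
          have := Fin.lt_def.mp hij
          push_cast [Nat.cast_sub (le_of_lt this)]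
          ring
        rw [hcast] at hgap
        have hi := hfi i; have hj := hfi j
        linarith
    · intro i
      have hgap := gap_lemma h3 hfv (m - 1 - (i:ℕ)) i ⟨m - 1, by omega⟩
        (by have := i.isLt; simp; omega)
      obtain ⟨k, hk⟩ := hfv ⟨m - 1, by omega⟩
      have hcast : ((m - 1 - (i:ℕ) : ℕ) : ℚ) = (m:ℚ) - 1 - ((i:ℕ):ℚ) := by
        have := i.isLt
        push_cast [Nat.cast_sub (by omega : (i:ℕ) ≤ m - 1), Nat.cast_sub (by omega : 1 ≤ m)]
        ring
      rw [hcast, hk] at hgap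
      have hi := hfi i
      have hknn : (0:ℚ) ≤ (k:ℚ) := Nat.cast_nonneg k
      linarith
    · rw [hl1val]
      have : ((n:ℚ)) + 1 ≤ (m:ℚ) := by exact_mod_cast hnm
      linarith
    · intro i hi
      rw [hl1val] at hi
      have hiN : (i:ℕ) + n + 2 > m := by
        by_contra hcon
        push_neg at hcon
        have : ((i:ℕ):ℚ) + (n:ℚ) + 2 ≤ (m:ℚ) := by exact_mod_cast hcon
        linarith
      set j : ℕ := m - 1 - (i:ℕ) with hjdef
      have hjn : j ≤ n := by omega
      have hjm : j < m := by omega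
      have := hkey j hjn hjm
      have hfin : (⟨m - 1 - j, by omega⟩ : Fin m) = i := Fin.ext (by have := i.isLt; simp; omega)
      rw [hfin] at this
      have hi2 := hfi i
      rw [this] at hi2
      have hjcast : (j:ℚ) = (m:ℚ) - 1 - ((i:ℕ):ℚ) := by
        rw [hjdef]
        have := i.isLt
        push_cast [Nat.cast_sub (by omega : (i:ℕ) ≤ m - 1), Nat.cast_sub (by omega : 1 ≤ m)]
        ring
      rw [hjcast] at hi2
      linarith
  -- Atypical
  have habs : |(tilde m lam0).1| = a := by rw [h1, abs_neg, abs_of_pos ha_pos]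
  have hfl : f ⟨m - 1 - n, by omega⟩ = a := by
    rw [hkey n le_rfl (by omega), han]
  have hAty : Atypical m lam0 := ⟨⟨m - 1 - n, by omega⟩, by rw [habs]; exact hfl.symm⟩
  -- atypType
  have hTy : atypType m lam0 = S := by
    unfold atypType
    rw [habs, ← hfdef, h2, erase_insert haS]
  -- negativity
  have hneg0 : (tilde m lam0).1 < 0 := by rw [h1]; linarith
  refine ⟨hGDom, hAty, hTy, hneg0, ?_⟩
  -- UNIQUENESS
  intro mu hG hA hT hneg
  obtain ⟨⟨z0, hz0⟩, hint2⟩ := hG.1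
  obtain ⟨hmono, hpos⟩ := hG.2.1
  have hmu0 := hG.2.2.1
  have htail := hG.2.2.2
  obtain ⟨l, hl⟩ := hA
  set g := (tilde m mu).2 with hgdefn
  have hgdef : ∀ i : Fin m, g i = mu.2 i + (m:ℚ) - 1/2 - ((i:ℕ):ℚ) := fun i => rfl
  have hmu1def : (tilde m mu).1 = mu.1 + 1/2 - (m:ℚ) := rfl
  set b : ℚ := -(tilde m mu).1 with hbdef
  have hb : |(tilde m mu).1| = b := abs_of_neg hneg
  have hbl : g l = b := by rw [← hl, hb]
  have hbpos : 0 < b := by rw [hbdef]; linarith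
  -- integrality: all mu coords integers
  have hint : ∀ i, ∃ zz : ℤ, mu.2 i = (zz:ℚ) := by
    rcases hint2 with h | h
    · exact h
    · exfalso
      obtain ⟨k, hk⟩ := h l
      have e1 : mu.2 l + (m:ℚ) - 1/2 - ((l:ℕ):ℚ) = -(mu.1 + 1/2 - (m:ℚ)) := by
        rw [← hgdef l, hbl, hbdef, hmu1def]
      have e2 : (k:ℚ) + 1/2 = ((l:ℕ):ℚ) - (z0:ℚ) := by
        rw [hk, hz0] at e1
        linarith
      have e3 : (2*k + 1 : ℤ) = 2*(((l:ℕ):ℤ) - z0) := by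
        have e4 : ((2*k + 1 : ℤ):ℚ) = ((2*(((l:ℕ):ℤ) - z0) : ℤ):ℚ) := by push_cast; linarith
        exact_mod_cast e4
      omega
  choose z hz using hint
  have hgv : ∀ i, ∃ k : ℕ, g i = (k:ℚ) + 1/2 := by
    intro i
    have hzi : (0:ℤ) ≤ z i := by
      have := hpos i; rw [hz i] at this; exact_mod_cast this
    have him : (i:ℕ) < m := i.isLt
    have hnn : (0:ℤ) ≤ z i + (m:ℤ) - 1 - ((i:ℕ):ℤ) := by omega
    refine ⟨(z i + (m:ℤ) - 1 - ((i:ℕ):ℤ)).toNat, ?_⟩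
    rw [hgdef i, hz i]
    have ht : (((z i + (m:ℤ) - 1 - ((i:ℕ):ℤ)).toNat : ℕ) : ℚ)
        = ((z i : ℚ) + (m:ℚ) - 1 - ((i:ℕ):ℚ)) := by
      rw [← Int.cast_natCast (R := ℚ), Int.toNat_of_nonneg hnn]
      push_cast
      ring
    rw [ht]
    ring
  have hgdec : ∀ i j : Fin m, i < j → g j < g i := by
    intro i j hij
    have hmo := hmono i j hij.le
    have hij' : ((i:ℕ):ℚ) < ((j:ℕ):ℚ) := by exact_mod_cast Fin.lt_def.mp hij
    rw [hgdef i, hgdef j]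
    linarith
  have hbimg : b ∈ Finset.univ.image g := by
    rw [mem_image]; exact ⟨l, mem_univ l, hbl⟩
  have hS' : S = (Finset.univ.image g).erase b := by
    rw [← hT]; unfold atypType; rw [hb]
  have himg : Finset.univ.image g = insert b S := by
    rw [hS', insert_erase hbimg]
  have hbS : b ∉ S := by rw [hS']; exact notMem_erase b _
  obtain ⟨nb, hnb⟩ := hgv l
  have hbval : b = (nb:ℚ) + 1/2 := by rw [← hbl, hnb]
  have hmu1 : mu.1 = (m:ℚ) - 1 - (nb:ℚ) := by
    have : mu.1 + 1/2 - (m:ℚ) = -b := by rw [← hmu1def, hbdef]; ring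
    rw [hbval] at this
    linarith
  have hnbm : nb + 1 ≤ m := by
    rw [hmu1] at hmu0
    have : ((nb:ℚ)) + 1 ≤ (m:ℚ) := by linarith
    exact_mod_cast this
  have hgtail : ∀ i : Fin m, m - 1 - nb ≤ (i:ℕ) →
      g i = (m:ℚ) - 1/2 - ((i:ℕ):ℚ) := by
    intro i hi
    have hlt : mu.1 < ((i:ℕ):ℚ) + 1 := by
      rw [hmu1]
      have h4 : m ≤ (i:ℕ) + 1 + nb := by omega
      have : (m:ℚ) ≤ ((i:ℕ):ℚ) + 1 + (nb:ℚ) := by exact_mod_cast h4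
      linarith
    have := htail i hlt
    rw [hgdef i, this]
    ring
  -- a = b
  have haleb : a ≤ b := hmin b ⟨nb, hbval⟩ hbS
  have hab : a = b := by
    by_contra hne
    have hlt : a < b := lt_of_le_of_ne haleb hne
    have hnanb : n < nb := by
      rw [han, hbval] at hlt
      exact_mod_cast (by linarith : (n:ℚ) < (nb:ℚ))
    set i : Fin m := ⟨m - 1 - n, by omega⟩ with hidef
    have hgi : g i = (m:ℚ) - 1/2 - (((m - 1 - n : ℕ)):ℚ) := hgtail i (by simp [hidef]; omega)
    have hcast : ((m - 1 - n : ℕ):ℚ) = (m:ℚ) - 1 - (n:ℚ) := by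
      push_cast [Nat.cast_sub (by omega : n ≤ m - 1), Nat.cast_sub (by omega : 1 ≤ m)]
      ring
    have hgia : g i = a := by rw [hgi, hcast, han]; ring
    have : a ∈ insert b S := by
      rw [← himg, mem_image]; exact ⟨i, mem_univ i, hgia⟩
    rcases mem_insert.mp this with h | h
    · exact hne h
    · exact haS h
  -- conclude
  have hfeq : g = f := by
    apply dec_image_eq hgdec h3
    rw [himg, ← hab, h2]
  have hfst : mu.1 = lam0.1 := by
    have e1 : mu.1 + 1/2 - (m:ℚ) = -a := by
      rw [← hmu1def]; rw [hab, hbdef]; ring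
    linarith [hl01, e1]
  have hsnd : mu.2 = lam0.2 := by
    funext i
    have := congrFun hfeq i
    rw [hgdef i, hfi i] at this
    linarith
  exact Prod.ext hfst hsnd


end
end

section
/- For every integral g_0-dominant atypical weight λ, one has (λ^σ)^ = (λˇ)^σ and (λ^σ)ˇ = (λ^)^σ. (Identity (2.13) of the paper, for k = 2m+1, where λ̃_0 ≠ 0 holds automatically.) -/
/-!
Combinatorics of weights for the orthosymplectic Lie superalgebra
`osp_{2m+1|2} = B(m,1)` (so `k = 2m+1`, `s = 1/2`), with its distinguished
Borel subalgebra.  A weight is a tuple `λ = (λ₀ | λ₁, …, λ_m) ∈ ℚ^{m+1}`,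
encoded as `ℚ × (Fin m → ℚ)` (the index `i : Fin m` stands for the coordinate
`λ_{i+1}`).
-/

open Finset

noncomputable section

/-! ### Auxiliary lemmas for the proof -/

/-- Flip the sign of the `ε`-part of a root. -/
def sflip {m : ℕ} (γ : Wt m) : Wt m := (γ.1, -γ.2)

lemma tilde_sigma (m : ℕ) (lam : Wt m) :
    tilde m (sigmaW m lam) = (-(tilde m lam).1, (tilde m lam).2) := by
  unfold tilde sigmaW
  refine Prod.ext ?_ rfl
  simp only
  ring

lemma sigma_sub (m : ℕ) (lam γ : Wt m) (c : ℚ) :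
    sigmaW m (lam - c • γ) = sigmaW m lam + c • sflip γ := by
  unfold sigmaW sflip
  refine Prod.ext ?_ ?_
  · simp [Prod.fst_sub, Prod.fst_add, Prod.smul_fst]
    ring
  · funext i
    simp [Prod.snd_sub, Prod.snd_add, Prod.smul_snd]
    try ring

lemma sigma_add (m : ℕ) (lam γ : Wt m) (c : ℚ) :
    sigmaW m (lam + c • γ) = sigmaW m lam - c • sflip γ := by
  unfold sigmaW sflip
  refine Prod.ext ?_ ?_
  · simp [Prod.fst_sub, Prod.fst_add, Prod.smul_fst]
    ring
  · funext i
    simp [Prod.snd_sub, Prod.snd_add, Prod.smul_snd]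
    try ring

lemma sflip_add_eps (m : ℕ) (l : Fin m) :
    sflip (deltaW m + epsW l) = deltaW m - epsW l := by
  unfold sflip deltaW epsW
  refine Prod.ext (by simp) (by simp)

lemma sflip_sub_eps (m : ℕ) (l : Fin m) :
    sflip (deltaW m - epsW l) = deltaW m + epsW l := by
  unfold sflip deltaW epsW
  refine Prod.ext (by simp) (by simp)

lemma atypRoot_sigma (m : ℕ) (lam γ : Wt m) (h : AtypRoot m lam γ) :
    AtypRoot m (sigmaW m lam) (sflip γ) := by
  obtain ⟨l, h | h⟩ := h
  · exact ⟨l, Or.inr ⟨by rw [h.1, sflip_add_eps],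
      by rw [tilde_sigma]; simpa using h.2⟩⟩
  · exact ⟨l, Or.inl ⟨by rw [h.1, sflip_sub_eps],
      by rw [tilde_sigma]; simp [h.2]⟩⟩

lemma regular_sigma (m : ℕ) (nu : Wt m) (h : Regular m nu) :
    Regular m (sigmaW m nu) := h

lemma regular_of_sigma (m : ℕ) (nu : Wt m) (h : Regular m (sigmaW m nu)) :
    Regular m nu := h

lemma isPlus_sigma (m : ℕ) (mu nu : Wt m) (h : IsPlus m mu nu) :
    IsPlus m (sigmaW m mu) (sigmaW m nu) := by
  obtain ⟨hdom, w, hw⟩ := h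
  refine ⟨hdom, w, ?_⟩
  rw [tilde_sigma, tilde_sigma]
  unfold tact at hw ⊢
  refine Prod.ext ?_ ?_
  · have := congrArg Prod.fst hw
    simpa using this
  · have := congrArg Prod.snd hw
    simpa using this

lemma isCheck_to_hat_sigma (m : ℕ) (lam B : Wt m) (h : IsCheck m lam B) :
    IsHat m (sigmaW m lam) (sigmaW m B) := by
  obtain ⟨γ, hγ, a, ha, hreg, hmin, hplus⟩ := h
  refine ⟨sflip γ, atypRoot_sigma m lam γ hγ, a, ha, ?_, ?_, ?_⟩
  · rw [← sigma_sub]; exact hreg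
  · intro b hb hba hr
    rw [← sigma_sub] at hr
    exact hmin b hb hba hr
  · rw [← sigma_sub]; exact isPlus_sigma _ _ _ hplus

lemma isHat_to_check_sigma (m : ℕ) (lam D : Wt m) (h : IsHat m lam D) :
    IsCheck m (sigmaW m lam) (sigmaW m D) := by
  obtain ⟨γ, hγ, a, ha, hreg, hmin, hplus⟩ := h
  refine ⟨sflip γ, atypRoot_sigma m lam γ hγ, a, ha, ?_, ?_, ?_⟩
  · rw [← sigma_add]; exact hreg
  · intro b hb hba hr
    rw [← sigma_add] at hr
    exact hmin b hb hba hr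
  · rw [← sigma_add]; exact isPlus_sigma _ _ _ hplus

lemma tilde2_strictAnti (m : ℕ) (nu : Wt m) (h : G0Dom m nu) :
    StrictAnti fun i => (tilde m nu).2 i := by
  intro i j hij
  have h1 : nu.2 j ≤ nu.2 i := h.1 i j hij.le
  have h2 : ((i : ℕ) : ℚ) < ((j : ℕ) : ℚ) := by exact_mod_cast hij
  simp only [tilde]
  linarith

lemma tilde2_pos (m : ℕ) (nu : Wt m) (h : G0Dom m nu) (i : Fin m) :
    0 < (tilde m nu).2 i := by
  have h1 : 0 ≤ nu.2 i := h.2 i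
  have h2 : ((i : ℕ) : ℚ) + 1 ≤ (m : ℚ) := by exact_mod_cast i.isLt
  simp only [tilde]
  linarith

lemma atypRoot_unique (m : ℕ) (mu γ γ' : Wt m) (hdom : G0Dom m mu)
    (h : AtypRoot m mu γ) (h' : AtypRoot m mu γ') : γ = γ' := by
  obtain ⟨l, h⟩ := h
  obtain ⟨l', h'⟩ := h'
  have hpos := tilde2_pos m mu hdom
  have hinj : Function.Injective fun i => (tilde m mu).2 i :=
    (tilde2_strictAnti m mu hdom).injective
  rcases h with ⟨hγ, he⟩ | ⟨hγ, he⟩ <;> rcases h' with ⟨hγ', he'⟩ | ⟨hγ', he'⟩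
  · have : l = l' := hinj (he.symm.trans he')
    rw [hγ, hγ', this]
  · exfalso
    have h12 : (tilde m mu).2 l = -(tilde m mu).2 l' := he.symm.trans he'
    have := hpos l; have := hpos l'
    linarith
  · exfalso
    have h12 : -(tilde m mu).2 l = (tilde m mu).2 l' := he.symm.trans he'
    have := hpos l; have := hpos l'
    linarith
  · have h12 : -(tilde m mu).2 l = -(tilde m mu).2 l' := he.symm.trans he'
    have : l = l' := hinj (by dsimp only; linarith)
    rw [hγ, hγ', this]

lemma tilde_injective (m : ℕ) (nu nu' : Wt m) (h : tilde m nu = tilde m nu') :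
    nu = nu' := by
  have h1 := congrArg Prod.fst h
  have h2 := congrArg Prod.snd h
  simp only [tilde] at h1 h2
  refine Prod.ext (by linarith) ?_
  funext i
  have := congrFun h2 i
  try simp only at this
  linarith

lemma isPlus_unique (m : ℕ) (ξ nu nu' : Wt m)
    (h : IsPlus m ξ nu) (h' : IsPlus m ξ nu') : nu = nu' := by
  obtain ⟨hd, w, hw⟩ := h
  obtain ⟨hd', w', hw'⟩ := h'
  -- the `tilde`-coordinates of a dominant weight are the decreasing
  -- rearrangement of the absolute values of those of ξ
  have key : ∀ (ν : Wt m) (u : W0T m), G0Dom m ν →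
      tilde m ν = tact m u (tilde m ξ) →
      Set.range (fun i => (tilde m ν).2 i)
        = Set.range (fun i => |(tilde m ξ).2 i|) := by
    intro ν u hdν hu
    have habs : ∀ i, (tilde m ν).2 i = |(tilde m ξ).2 (u.1⁻¹ i)| := by
      intro i
      have := congrFun (congrArg Prod.snd hu) i
      simp only [tact] at this
      have hp := tilde2_pos m ν hdν i
      cases hb : u.2 i <;> rw [hb] at this <;> simp at this
      · rw [this] at hp ⊢
        rw [Equiv.Perm.inv_def, abs_of_pos hp]
      · rw [this] at hp ⊢
        rw [Equiv.Perm.inv_def, abs_of_neg (by linarith)]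
    have : (fun i => (tilde m ν).2 i)
        = (fun i => |(tilde m ξ).2 i|) ∘ (fun i => u.1⁻¹ i) := funext habs
    rw [this, Set.range_comp]
    rw [show (fun i => u.1⁻¹ i) = ⇑u.1⁻¹ from rfl, Equiv.range_eq_univ,
      Set.image_univ]
  have hr : Set.range (fun i => (tilde m nu).2 i)
      = Set.range (fun i => (tilde m nu').2 i) := by
    rw [key nu w hd hw, key nu' w' hd' hw']
  have heq2 : (fun i => (tilde m nu).2 i) = fun i => (tilde m nu').2 i :=
    ((tilde2_strictAnti m nu hd).range_inj (tilde2_strictAnti m nu' hd')).mp hr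
  have heq1 : (tilde m nu).1 = (tilde m nu').1 := by
    have a1 := congrArg Prod.fst hw
    have a2 := congrArg Prod.fst hw'
    simp only [tact] at a1 a2
    rw [a1, a2]
  exact tilde_injective m nu nu' (Prod.ext heq1 (funext fun i => congrFun heq2 i))

lemma isHat_unique (m : ℕ) (mu nu nu' : Wt m) (hdom : G0Dom m mu)
    (h : IsHat m mu nu) (h' : IsHat m mu nu') : nu = nu' := by
  obtain ⟨γ, hγ, a, ha, hreg, hmin, hplus⟩ := h
  obtain ⟨γ', hγ', a', ha', hreg', hmin', hplus'⟩ := h'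
  have hγγ : γ = γ' := atypRoot_unique m mu γ γ' hdom hγ hγ'
  subst hγγ
  have haa : a = a' := by
    rcases lt_trichotomy a a' with hlt | heq | hlt
    · exact absurd hreg (hmin' a ha hlt)
    · exact heq
    · exact absurd hreg' (hmin a' ha' hlt)
  subst haa
  exact isPlus_unique m _ nu nu' hplus hplus'

lemma isCheck_unique (m : ℕ) (mu nu nu' : Wt m) (hdom : G0Dom m mu)
    (h : IsCheck m mu nu) (h' : IsCheck m mu nu') : nu = nu' := by
  obtain ⟨γ, hγ, a, ha, hreg, hmin, hplus⟩ := h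
  obtain ⟨γ', hγ', a', ha', hreg', hmin', hplus'⟩ := h'
  have hγγ : γ = γ' := atypRoot_unique m mu γ γ' hdom hγ hγ'
  subst hγγ
  have haa : a = a' := by
    rcases lt_trichotomy a a' with hlt | heq | hlt
    · exact absurd hreg (hmin' a ha hlt)
    · exact heq
    · exact absurd hreg' (hmin a' ha' hlt)
  subst haa
  exact isPlus_unique m _ nu nu' hplus hplus'

/-- identity (2.13) of the paper for `k = 2m+1`: for every
integral `g₀`-dominant atypical weight `λ`, one has `(λ^σ)^ = (λˇ)^σ` and
`(λ^σ)ˇ = (λ^)^σ`. -/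
theorem sigma_hat_check_identity (m : ℕ) (hm : 1 ≤ m) (lam : Wt m)
    (hInt : Integral m lam) (hdom : G0Dom m lam) (hatyp : Atypical m lam)
    (A B C D : Wt m)
    (hA : IsHat m (sigmaW m lam) A) (hB : IsCheck m lam B)
    (hC : IsCheck m (sigmaW m lam) C) (hD : IsHat m lam D) :
    A = sigmaW m B ∧ C = sigmaW m D := by
  refine ⟨isHat_unique m (sigmaW m lam) A (sigmaW m B) hdom hA
    (isCheck_to_hat_sigma m lam B hB), ?_⟩
  exact isCheck_unique m (sigmaW m lam) C (sigmaW m D) hdom hC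
    (isHat_to_check_sigma m lam D hD)

end
end
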